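/- For every A ∈ M_m(K) there exists a matrix B ∈ 𝒰_m that is unitary μ-similar to A (μ = (1,…,1)): there exist a lower triangular matrix C ∈ M_m(K) and an upper triangular matrix D ∈ M_m(K), both with all diagonal entries equal to 1, such that C A D ∈ 𝒰_m. -/

import Mathlib

open Matrix Finset

/-- `𝒰_m`: each row and each column contains at most one nonzero entry. -/
def InU {K : Type*} [Field K] {m : ℕ} (B : Matrix (Fin m) (Fin m) K) : Prop :=
  (∀ i j k : Fin m, B i j ≠ 0 → B i k ≠ 0 → j = k) ∧
  (∀ i j k : Fin m, B i j ≠ 0 → B k j ≠ 0 → i = k)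

section Aux

variable {K : Type*} [Field K] {m : ℕ}

/-- lower unitriangular -/
def LowerUni (C : Matrix (Fin m) (Fin m) K) : Prop :=
  (∀ i j : Fin m, i < j → C i j = 0) ∧ (∀ i : Fin m, C i i = 1)

/-- upper unitriangular -/
def UpperUni (D : Matrix (Fin m) (Fin m) K) : Prop :=
  (∀ i j : Fin m, j < i → D i j = 0) ∧ (∀ i : Fin m, D i i = 1)

lemma lowerUni_one : LowerUni (1 : Matrix (Fin m) (Fin m) K) := by
  constructor
  · intro i j hij
    exact Matrix.one_apply_ne (ne_of_lt hij)
  · intro i; exact Matrix.one_apply_eq i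

lemma upperUni_one : UpperUni (1 : Matrix (Fin m) (Fin m) K) := by
  constructor
  · intro i j hij
    exact Matrix.one_apply_ne (ne_of_gt hij)
  · intro i; exact Matrix.one_apply_eq i

lemma LowerUni.mul {C C' : Matrix (Fin m) (Fin m) K} (hC : LowerUni C)
    (hC' : LowerUni C') : LowerUni (C * C') := by
  constructor
  · intro i j hij
    rw [Matrix.mul_apply]
    apply Finset.sum_eq_zero
    intro k _
    rcases lt_or_ge i k with h | h
    · rw [hC.1 i k h, zero_mul]
    · rw [hC'.1 k j (lt_of_le_of_lt h hij), mul_zero]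
  · intro i
    rw [Matrix.mul_apply, Finset.sum_eq_single i]
    · rw [hC.2, hC'.2, one_mul]
    · intro k _ hk
      rcases lt_or_gt_of_ne hk with h | h
      · rw [hC'.1 k i h, mul_zero]
      · rw [hC.1 i k h, zero_mul]
    · intro h; exact absurd (Finset.mem_univ i) h

lemma UpperUni.mul {D D' : Matrix (Fin m) (Fin m) K} (hD : UpperUni D)
    (hD' : UpperUni D') : UpperUni (D * D') := by
  constructor
  · intro i j hij
    rw [Matrix.mul_apply]
    apply Finset.sum_eq_zero
    intro k _
    rcases lt_or_ge k i with h | h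
    · rw [hD.1 i k h, zero_mul]
    · rw [hD'.1 k j (lt_of_lt_of_le hij h), mul_zero]
  · intro i
    rw [Matrix.mul_apply, Finset.sum_eq_single i]
    · rw [hD.2, hD'.2, one_mul]
    · intro k _ hk
      rcases lt_or_gt_of_ne hk with h | h
      · rw [hD.1 i k h, zero_mul]
      · rw [hD'.1 k i h, mul_zero]
    · intro h; exact absurd (Finset.mem_univ i) h

/-- `M` is reduced on all columns `< t`: each such column has at most one
nonzero entry, and a row containing such an entry is zero elsewhere. -/
def Red (t : ℕ) (M : Matrix (Fin m) (Fin m) K) : Prop :=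
  ∀ j : Fin m, (j : ℕ) < t →
    (∀ i k : Fin m, M i j ≠ 0 → M k j ≠ 0 → i = k) ∧
    (∀ i k : Fin m, M i j ≠ 0 → k ≠ j → M i k = 0)

lemma step (M : Matrix (Fin m) (Fin m) K) (t : Fin m) (h : Red t.val M) :
    ∃ C D : Matrix (Fin m) (Fin m) K, LowerUni C ∧ UpperUni D ∧
      Red (t.val + 1) (C * M * D) := by
  classical
  by_cases hz : ∀ i, M i t = 0
  · refine ⟨1, 1, lowerUni_one, upperUni_one, ?_⟩
    rw [one_mul, mul_one]
    intro j hj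
    rcases Nat.lt_succ_iff_lt_or_eq.mp hj with hjt | hjt
    · exact h j hjt
    · have hjeq : j = t := Fin.ext hjt
      subst hjeq
      constructor
      · intro i k hi _; exact absurd (hz i) hi
      · intro i k hi _; exact absurd (hz i) hi
  · push_neg at hz
    set S : Finset (Fin m) := Finset.univ.filter (fun i => M i t ≠ 0) with hSdef
    have hS : S.Nonempty := by
      obtain ⟨i, hi⟩ := hz
      exact ⟨i, by simp [hSdef, hi]⟩
    set p : Fin m := S.min' hS with hpdef
    have hp : M p t ≠ 0 := by
      have := S.min'_mem hS
      simpa [hSdef] using this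
    have hmin : ∀ i : Fin m, i < p → M i t = 0 := by
      intro i hip
      by_contra hne
      have : i ∈ S := by simp [hSdef, hne]
      exact absurd (S.min'_le i this) (not_le.mpr hip)
    -- row p of M vanishes on columns < t
    have hrow : ∀ j : Fin m, (j : ℕ) < t.val → M p j = 0 := by
      intro j hj
      by_contra hne
      have htj : t ≠ j := fun e => absurd (e ▸ hj) (lt_irrefl _)
      exact hp ((h j hj).2 p t hne htj)
    set c : Fin m → K := fun i => if p < i then M i t / M p t else 0 with hcdef
    have hcp : c p = 0 := by simp [hcdef]
    set d : Fin m → K := fun j => if t < j then M p j / M p t else 0 with hddef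
    have hdt : d t = 0 := by simp [hddef]
    have hdlow : ∀ j : Fin m, (j : ℕ) < t.val → d j = 0 := by
      intro j hj
      have : ¬ t < j := not_lt.mpr (le_of_lt hj)
      simp [hddef, this]
    set C : Matrix (Fin m) (Fin m) K :=
      Matrix.of fun i k => (if i = k then (1 : K) else 0) - (if k = p then c i else 0)
      with hCdef
    set D : Matrix (Fin m) (Fin m) K :=
      Matrix.of fun k j => (if k = j then (1 : K) else 0) - (if k = t then d j else 0)
      with hDdef
    have hC : LowerUni C := by
      constructor
      · intro i j hij
        have h1 : i ≠ j := ne_of_lt hij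
        by_cases hjp : j = p
        · have hno : ¬ p < i := hjp ▸ lt_asymm hij
          have h2 : i ≠ p := hjp ▸ h1
          simp [hCdef, h1, hjp, hcdef, hno, h2]
        · simp [hCdef, h1, hjp]
      · intro i
        by_cases hip : i = p
        · simp [hCdef, hip, hcp]
        · simp [hCdef, hip]
    have hD : UpperUni D := by
      constructor
      · intro i j hij
        have h1 : i ≠ j := ne_of_gt hij
        by_cases hit : i = t
        · have hno : ¬ t < j := hit ▸ lt_asymm hij
          have h2 : t ≠ j := hit ▸ ne_of_gt hij
          simp [hDdef, h1, hit, hddef, hno, h2]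
        · simp [hDdef, h1, hit]
      · intro k
        by_cases hkt : k = t
        · simp [hDdef, hkt, hdt]
        · simp [hDdef, hkt]
    -- entry formulas
    have hB : ∀ i j, (C * M) i j = M i j - c i * M p j := by
      intro i j
      rw [Matrix.mul_apply]
      simp [hCdef, sub_mul, ite_mul, Finset.sum_sub_distrib,
        Finset.sum_ite_eq, Finset.sum_ite_eq']
    have hE : ∀ i j, (C * M * D) i j =
        (M i j - c i * M p j) - (M i t - c i * M p t) * d j := by
      intro i j
      rw [Matrix.mul_apply]
      simp only [hDdef, Matrix.of_apply, mul_sub, mul_ite, mul_one, mul_zero,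
        Finset.sum_sub_distrib, Finset.sum_ite_eq', Finset.mem_univ, if_true]
      rw [hB, hB]
    have hBt : ∀ i : Fin m, i ≠ p → M i t - c i * M p t = 0 := by
      intro i hip
      rcases lt_or_gt_of_ne hip with hlt | hgt
      · have h1 : M i t = 0 := hmin i hlt
        have h2 : c i = 0 := by simp [hcdef, not_lt.mpr (le_of_lt hlt)]
        simp [h1, h2]
      · have h2 : c i = M i t / M p t := by simp [hcdef, hgt]
        rw [h2, div_mul_cancel₀ _ hp, sub_self]
    -- prove Red (t+1)
    refine ⟨C, D, hC, hD, ?_⟩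
    intro j hj
    rcases Nat.lt_succ_iff_lt_or_eq.mp hj with hjt | hjt
    · -- column j < t is unchanged
      have hMpj : M p j = 0 := hrow j hjt
      have hdj : d j = 0 := hdlow j hjt
      have hcol' : ∀ i, (C * M * D) i j = M i j := by
        intro i; rw [hE, hMpj, hdj]; ring
      constructor
      · intro i k hi hk
        rw [hcol'] at hi hk
        exact (h j hjt).1 i k hi hk
      · intro i k hi hkj
        rw [hcol'] at hi
        have hrowi : ∀ l : Fin m, l ≠ j → M i l = 0 := fun l hl => (h j hjt).2 i l hi hl
        have hMit : M i t = 0 := hrowi t (fun e => absurd (e ▸ hjt) (lt_irrefl _))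
        have hci : c i = 0 := by
          by_cases hpi : p < i
          · simp [hcdef, hpi, hMit]
          · simp [hcdef, hpi]
        rw [hE, hci, hMit, hrowi k hkj]; ring
    · -- column t: single nonzero entry at row p; row p zero elsewhere
      have hjeq : j = t := Fin.ext hjt
      subst hjeq
      have hEit : ∀ i, (C * M * D) i j = M i j - c i * M p j := by
        intro i; rw [hE, hdt]; ring
      have hEzero : ∀ i : Fin m, i ≠ p → (C * M * D) i j = 0 := by
        intro i hip; rw [hEit]; exact hBt i hip
      have hEp : ∀ k : Fin m, k ≠ j → (C * M * D) p k = 0 := by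
        intro k hkj
        rw [hE, hcp]
        rcases lt_or_gt_of_ne hkj with hlt | hgt
        · have h1 : M p k = 0 := hrow k hlt
          have h2 : d k = 0 := hdlow k hlt
          simp [h1, h2]
        · have h2 : d k = M p k / M p j := by simp [hddef, hgt]
          rw [h2]
          field_simp
          simp
      constructor
      · intro i k hi hk
        have hip : i = p := by
          by_contra hne; exact hi (hEzero i hne)
        have hkp : k = p := by
          by_contra hne; exact hk (hEzero k hne)
        rw [hip, hkp]
      · intro i k hi hkj
        have hip : i = p := by
          by_contra hne; exact hi (hEzero i hne)
        rw [hip]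
        exact hEp k hkj

end Aux

/-- Lemma 3.7: every matrix is unitary μ-similar (μ = (1,…,1)) to a matrix
of `𝒰_m`. -/
theorem stmt_11 {K : Type*} [Field K] {m : ℕ} (A : Matrix (Fin m) (Fin m) K) :
    ∃ C D : Matrix (Fin m) (Fin m) K,
      (∀ i j : Fin m, i < j → C i j = 0) ∧ (∀ i : Fin m, C i i = 1) ∧
      (∀ i j : Fin m, j < i → D i j = 0) ∧ (∀ i : Fin m, D i i = 1) ∧
      InU (C * A * D) := by
  have main : ∀ t : ℕ, t ≤ m → ∃ C D : Matrix (Fin m) (Fin m) K,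
      LowerUni C ∧ UpperUni D ∧ Red t (C * A * D) := by
    intro t
    induction t with
    | zero =>
      intro _
      exact ⟨1, 1, lowerUni_one, upperUni_one, fun j hj => absurd hj (Nat.not_lt_zero _)⟩
    | succ n ih =>
      intro hn
      obtain ⟨C, D, hC, hD, hred⟩ := ih (Nat.le_of_succ_le hn)
      obtain ⟨C', D', hC', hD', hred'⟩ := step (C * A * D) ⟨n, hn⟩ hred
      refine ⟨C' * C, D * D', hC'.mul hC, hD.mul hD', ?_⟩
      have heq : (C' * C) * A * (D * D') = C' * (C * A * D) * D' := by
        noncomm_ring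
      rwa [heq]
  obtain ⟨C, D, hC, hD, hred⟩ := main m le_rfl
  refine ⟨C, D, hC.1, hC.2, hD.1, hD.2, ?_, ?_⟩
  · intro i j k hj hk
    by_contra hne
    exact hk ((hred j j.isLt).2 i k hj (fun e => hne e.symm))
  · intro i j k hi hk
    exact (hred j j.isLt).1 i k hi hk
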